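/- Let $k$ be a field, $a, b \in k^\times$ with $a + b \neq 0$, and $(u_0, \dots, u_n) \in k^{n+1}$ with all $u_i \neq 0$ and $\sum u_i = 0$. Let $\ell(t) = -\frac{ab}{u_0} t + a + b$ and let $W \subset \mathbb{A}^{n+2}$ be the curve cut out by the ideal $\big((t_1 + t_0)\ell(t_0) - u_0,\; t_2 \ell(t_0) - u_1,\; \dots,\; t_{n+1}\ell(t_0) - u_n\big)$ (coordinates $t_0, \dots, t_{n+1}$). Then: (i) every point of $W$ satisfies $\ell(t_0) \neq 0$ and $W$ equals the parametrized locus $\{(t, -t + u_0/\ell(t), u_1/\ell(t), \dots, u_n/\ell(t))\}$; (ii) the intersection of $W$ with the face $t_0 = 0$ is the single point $\frac{1}{a+b}(u_0, \dots, u_n)$; (iii) the intersection of $W$ with the face $t_0 + t_1 = 0$ (equivalently, the solutions of $-t + u_0/\ell(t) = 0$) consists of the two points $\frac{1}{a}(u_0, \dots, u_n)$ and $\frac{1}{b}(u_0, \dots, u_n)$ (with multiplicity, coinciding if $a = b$); (iv) $W$ does not meet the faces $t_i = 0$ for $i \geq 2$. -/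

import Mathlib

noncomputable section

variable {k : Type*} [Field k]

/-- the curve `W ⊆ 𝔸^{n+2}` cut out by the ideal
`((t₁+t₀)ℓ(t₀) - u₀, t₂ℓ(t₀) - u₁, …, t_{n+1}ℓ(t₀) - uₙ)` with
`ℓ(t) = -(ab/u₀)t + a + b`: (o) it lies on `Q^{n+1} = {∑ tᵢ = 0}`;
(i) every point of `W` satisfies `ℓ(t₀) ≠ 0` and `W` is exactly the parametrized locus
`t ↦ (t, -t + u₀/ℓ(t), u₁/ℓ(t), …, uₙ/ℓ(t))`;
(ii) on the face `t₀ = 0` the remaining coordinates are `(1/(a+b))·(u₀, …, uₙ)`;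
(iii) on the second face (vanishing of the second coordinate `-t + u₀/ℓ(t)`,
as in the quadratic equation of the paper) one has `t₀ = u₀/a` or `t₀ = u₀/b`, the remaining
coordinates then being `(1/a)·u` resp. `(1/b)·u`;
(iv) `W` does not meet the faces `tᵢ = 0` for `i ≥ 2`. -/
theorem stmt17 {n : ℕ} (a b : k) (ha : a ≠ 0) (hb : b ≠ 0) (hab : a + b ≠ 0)
    (u : Fin (n + 1) → k) (hu : ∀ i, u i ≠ 0) (husum : ∑ i, u i = 0)
    (ell : k → k) (hell : ∀ t, ell t = -(a * b / u 0) * t + a + b)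
    (onW : (Fin (n + 2) → k) → Prop)
    (honW : ∀ y, onW y ↔
      ((y 1 + y 0) * ell (y 0) = u 0 ∧
        ∀ j : Fin n, y j.succ.succ * ell (y 0) = u j.succ))
    (param : k → Fin (n + 2) → k)
    (hparam : ∀ t, param t =
      Fin.cons t (Fin.cons (-t + u 0 / ell t) (fun j : Fin n => u j.succ / ell t))) :
    -- (o) `W ⊆ Q^{n+1}`
    (∀ y, onW y → ∑ i, y i = 0) ∧
    -- (i) the closed locus is the parametrized locus
    (∀ y, onW y → ell (y 0) ≠ 0 ∧ y = param (y 0)) ∧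
    (∀ t, ell t ≠ 0 → onW (param t)) ∧
    -- (ii) intersection with the face `t₀ = 0`
    (∀ y, onW y → y 0 = 0 → ∀ i : Fin (n + 1), y i.succ = u i / (a + b)) ∧
    -- (iii) intersection with the second face (`y 1 = 0`, i.e. the solutions of
    -- `-t + u₀/ℓ(t) = 0`)
    (∀ y, onW y → y 1 = 0 →
      ((y 0 = u 0 / a ∧ ∀ j : Fin n, y j.succ.succ = u j.succ / a) ∨
        (y 0 = u 0 / b ∧ ∀ j : Fin n, y j.succ.succ = u j.succ / b))) ∧
    -- (iv) `W` misses the faces `tᵢ = 0`, `i ≥ 2`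
    (∀ y, onW y → ∀ j : Fin n, y j.succ.succ ≠ 0) := by
  have hu0 := hu 0
  have key : ∀ y, onW y → ell (y 0) ≠ 0 := by
    intro y hy hl
    rw [honW] at hy
    have h1 := hy.1
    rw [hl, mul_zero] at h1
    exact hu0 h1.symm
  refine ⟨?_, ?_, ?_, ?_, ?_, ?_⟩
  · -- (o)
    intro y hy
    have hl := key y hy
    rw [honW] at hy
    have hsum : (∑ i, y i) * ell (y 0) = ∑ i, u i := by
      rw [Fin.sum_univ_succ (f := y), Fin.sum_univ_succ (f := fun i : Fin (n+1) => y i.succ),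
        Fin.sum_univ_succ (f := u)]
      have h2 : ∑ j : Fin n, y j.succ.succ * ell (y 0) = ∑ j : Fin n, u j.succ :=
        Finset.sum_congr rfl fun j _ => hy.2 j
      have h1 := hy.1
      calc (y 0 + (y (0 : Fin (n+1)).succ + ∑ j : Fin n, y j.succ.succ)) * ell (y 0)
          = (y 1 + y 0) * ell (y 0) + ∑ j : Fin n, y j.succ.succ * ell (y 0) := by
            rw [Fin.succ_zero_eq_one]; simp only [add_mul, Finset.sum_mul]; ring
        _ = u 0 + ∑ j : Fin n, u j.succ := by rw [h1, h2]
    rw [husum] at hsum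
    exact (mul_eq_zero.mp hsum).resolve_right hl
  · -- (i) forward
    intro y hy
    have hl := key y hy
    rw [honW] at hy
    refine ⟨hl, ?_⟩
    funext i
    rw [hparam]
    refine Fin.cases ?_ (fun i => Fin.cases ?_ (fun j => ?_) i) i
    · simp
    · simp only [Fin.cons_succ, Fin.cons_zero]
      rw [Fin.succ_zero_eq_one]
      have h1 := hy.1
      field_simp
      linear_combination h1
    · simp only [Fin.cons_succ]
      exact eq_div_of_mul_eq hl (hy.2 j)
  · -- (i) backward
    intro t hlt
    rw [honW, hparam]
    simp only [Fin.cons_zero, Fin.cons_succ]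
    constructor
    · rw [← Fin.succ_zero_eq_one, Fin.cons_succ, Fin.cons_zero]
      field_simp
      ring
    · intro j
      field_simp
  · -- (ii)
    intro y hy h0
    have hl : ell (y 0) = a + b := by rw [hell, h0]; ring
    rw [honW] at hy
    intro i
    refine Fin.cases ?_ (fun j => ?_) i
    · have h1 := hy.1
      rw [hl, h0, add_zero] at h1
      rw [Fin.succ_zero_eq_one]
      exact eq_div_of_mul_eq hab h1
    · have h2 := hy.2 j
      rw [hl] at h2
      exact eq_div_of_mul_eq hab h2
  · -- (iii)
    intro y hy h1
    have hl := key y hy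
    rw [honW] at hy
    have heq := hy.1
    rw [h1, zero_add] at heq
    rw [hell] at heq
    have hfac : (a * y 0 - u 0) * (b * y 0 - u 0) = 0 := by
      have : y 0 * (-(a * b / u 0) * y 0 + a + b) = u 0 := heq
      field_simp at this
      linear_combination -this
    rcases mul_eq_zero.mp hfac with h | h
    · left
      have hy0 : y 0 = u 0 / a := by
        field_simp
        linear_combination h
      have hla : ell (y 0) = a := by
        rw [hell, hy0]
        field_simp
        ring
      exact ⟨hy0, fun j => by
        have h2 := hy.2 j
        rw [hla] at h2
        exact eq_div_of_mul_eq ha h2⟩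
    · right
      have hy0 : y 0 = u 0 / b := by
        field_simp
        linear_combination h
      have hlb : ell (y 0) = b := by
        rw [hell, hy0]
        field_simp
        ring
      exact ⟨hy0, fun j => by
        have h2 := hy.2 j
        rw [hlb] at h2
        exact eq_div_of_mul_eq hb h2⟩
  · -- (iv)
    intro y hy j hj
    rw [honW] at hy
    have h2 := hy.2 j
    rw [hj, zero_mul] at h2
    exact hu j.succ h2.symm


end
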